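/- (Discrete reverse Taylor formula) Let X, Y be independent ℕ-valued random variables with sufficient moments, N ∈ ℕ, and f : ℕ → ℝ of polynomial growth. Then E[f(X)] = Σ_{d ≥ 0} (−1)^d Σ_{J ∈ ℕ_*^d, |J| ≤ N} m_Y^{(J)}·E[Δ^{|J|} f(X+Y)] + ε_N(f,X,Y), where ε_N(f,X,Y) := − Σ_{d ≥ 0} (−1)^d Σ_{J ∈ ℕ_*^d, |J| ≤ N} m_Y^{(J)}·δ_{N−|J|}(Δ^{|J|} f, X, Y). -/

import Mathlib

open MeasureTheory ProbabilityTheory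

/-- Forward difference operator on functions `ℕ → ℝ`. -/
def fdiff (f : ℕ → ℝ) : ℕ → ℝ := fun x => f (x + 1) - f x

/-- The sum `Σ_{0 ≤ j_1 < ... < j_{M+1} < y} Δ^{M+1} f(x + j_1)`: strictly increasing
`(M+1)`-tuples in `{0,…,y−1}` are identified with `(M+1)`-element subsets of
`Finset.range y`, with `j_1` the least element. -/
noncomputable def tupleSum (f : ℕ → ℝ) (x y M : ℕ) : ℝ :=
  ∑ s ∈ (Finset.range y).powersetCard (M + 1), fdiff^[M + 1] f (x + s.min.untopD 0)

/-- The index set `{J ∈ ℕ_*^d : |J| ≤ N}` of `d`-tuples of positive integers with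
`|J| = j_1 + ⋯ + j_d ≤ N` (each coordinate then automatically lies in `[1, N]`). -/
def indexSet (d N : ℕ) : Finset (Fin d → ℕ) :=
  (Fintype.piFinset fun _ => Finset.Icc 1 N).filter fun J => ∑ l, J l ≤ N


lemma untop'_min (s : Finset ℕ) (h : s.Nonempty) : s.min.untopD 0 = s.min' h := by
  rw [← Finset.coe_min' h, WithTop.untopD_coe]

lemma mins_mem {s : Finset ℕ} (h : s.Nonempty) : s.min.untopD 0 ∈ s := by
  rw [untop'_min s h]; exact s.min'_mem h

lemma mins_le {s : Finset ℕ} (h : s.Nonempty) {a : ℕ} (ha : a ∈ s) : s.min.untopD 0 ≤ a := by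
  rw [untop'_min s h]; exact s.min'_le a ha

lemma mins_insert {s : Finset ℕ} (hne : s.Nonempty) {i : ℕ} (hi : i < s.min.untopD 0) :
    (insert i s).min.untopD 0 = i := by
  have hne' : (insert i s).Nonempty := ⟨i, Finset.mem_insert_self i s⟩
  refine le_antisymm (mins_le hne' (Finset.mem_insert_self i s)) ?_
  rcases Finset.mem_insert.mp (mins_mem hne') with h | h
  · omega
  · exact le_trans hi.le (mins_le hne h)

lemma telescope (g : ℕ → ℝ) (x j : ℕ) :
    g (x + j) = g x + ∑ i ∈ Finset.range j, fdiff g (x + i) := by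
  have := Finset.sum_range_sub (fun i => g (x + i)) j
  simp only [fdiff, add_zero] at this ⊢
  have h2 : ∀ i, x + i + 1 = x + (i+1) := by omega
  rw [Finset.sum_congr rfl (fun i _ => by rw [h2 i])]
  linarith [this]

lemma sum_sigma_min (φ : ℕ → ℝ) (y n : ℕ) :
    ∑ s ∈ (Finset.range y).powersetCard (n+1), ∑ i ∈ Finset.range (s.min.untopD 0), φ i
      = ∑ t ∈ (Finset.range y).powersetCard (n+2), φ (t.min.untopD 0) := by
  rw [Finset.sum_sigma']
  refine Finset.sum_nbij' (fun p => insert p.2 p.1)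
    (fun t => ⟨t.erase (t.min.untopD 0), t.min.untopD 0⟩) ?_ ?_ ?_ ?_ ?_
  · rintro ⟨s, i⟩ hp
    simp only [Finset.mem_sigma, Finset.mem_powersetCard, Finset.mem_range] at hp ⊢
    obtain ⟨⟨hsub, hcard⟩, hi⟩ := hp
    have hne : s.Nonempty := Finset.card_pos.mp (by omega)
    have hnotmem : i ∉ s := fun hmem => absurd (mins_le hne hmem) (by omega)
    constructor
    · intro a ha
      rcases Finset.mem_insert.mp ha with rfl | ha
      · have h1 := hsub (mins_mem hne)
        simp only [Finset.mem_range] at h1 ⊢; omega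
      · exact hsub ha
    · rw [Finset.card_insert_of_notMem hnotmem, hcard]
  · rintro t ht
    simp only [Finset.mem_sigma, Finset.mem_powersetCard, Finset.mem_range] at ht ⊢
    obtain ⟨hsub, hcard⟩ := ht
    have hne : t.Nonempty := Finset.card_pos.mp (by omega)
    have hmem := mins_mem hne
    have hecard : (t.erase (t.min.untopD 0)).card = n + 1 := by
      rw [Finset.card_erase_of_mem hmem]; omega
    have hene : (t.erase (t.min.untopD 0)).Nonempty := Finset.card_pos.mp (by omega)
    refine ⟨⟨fun a ha => hsub (Finset.mem_of_mem_erase ha), hecard⟩, ?_⟩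
    have hm2 := mins_mem hene
    exact lt_of_le_of_ne (mins_le hne (Finset.mem_of_mem_erase hm2))
      (Ne.symm (Finset.ne_of_mem_erase hm2))
  · rintro ⟨s, i⟩ hp
    simp only [Finset.mem_sigma, Finset.mem_powersetCard, Finset.mem_range] at hp
    obtain ⟨⟨hsub, hcard⟩, hi⟩ := hp
    have hne : s.Nonempty := Finset.card_pos.mp (by omega)
    have hnotmem : i ∉ s := fun hmem => absurd (mins_le hne hmem) (by omega)
    have hmin := mins_insert hne hi
    simp only [hmin, Finset.erase_insert hnotmem]
  · rintro t ht
    simp only [Finset.mem_powersetCard] at ht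
    obtain ⟨hsub, hcard⟩ := ht
    have hne : t.Nonempty := Finset.card_pos.mp (by omega)
    simp only [Finset.insert_erase (mins_mem hne)]
  · rintro ⟨s, i⟩ hp
    simp only [Finset.mem_sigma, Finset.mem_powersetCard, Finset.mem_range] at hp
    obtain ⟨⟨hsub, hcard⟩, hi⟩ := hp
    have hne : s.Nonempty := Finset.card_pos.mp (by omega)
    rw [mins_insert hne hi]

lemma tupleSum_succ (f : ℕ → ℝ) (x y P : ℕ) :
    tupleSum f x y P = (y.choose (P+1) : ℝ) * fdiff^[P+1] f x + tupleSum f x y (P+1) := by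
  unfold tupleSum
  have h3 : fdiff^[P+2] f = fdiff (fdiff^[P+1] f) := Function.iterate_succ_apply' fdiff (P+1) f
  have key : ∀ s : Finset ℕ, fdiff^[P+1] f (x + s.min.untopD 0)
      = fdiff^[P+1] f x + ∑ i ∈ Finset.range (s.min.untopD 0), fdiff^[P+2] f (x + i) := by
    intro s
    rw [telescope (fdiff^[P+1] f) x (s.min.untopD 0), h3]
  rw [Finset.sum_congr rfl fun s _ => key s, Finset.sum_add_distrib, Finset.sum_const,
    Finset.card_powersetCard, Finset.card_range, nsmul_eq_mul,
    sum_sigma_min (fun i => fdiff^[P+2] f (x + i)) y P]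

lemma taylor (f : ℕ → ℝ) (x y P : ℕ) :
    f (x + y) = ∑ j ∈ Finset.range (P+1), (y.choose j : ℝ) * fdiff^[j] f x + tupleSum f x y P := by
  induction P with
  | zero =>
    simp only [zero_add, Finset.range_one, Finset.sum_singleton, Nat.choose_zero_right,
      Nat.cast_one, one_mul, Function.iterate_zero_apply]
    rw [telescope f x y]
    congr 1
    unfold tupleSum
    rw [Finset.powersetCard_one, Finset.sum_map]
    refine Finset.sum_congr rfl fun j _ => ?_
    simp only [Function.Embedding.coeFn_mk, Finset.min_singleton, WithTop.untopD_coe,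
      zero_add, Function.iterate_one]
  | succ P ih =>
    conv_rhs => rw [Finset.sum_range_succ]
    rw [ih, tupleSum_succ f x y P]
    ring

noncomputable def S (m A : ℕ → ℝ) (B : ℕ) : ℝ :=
  ∑ d ∈ Finset.range (B+1), (-1:ℝ)^d * ∑ J ∈ indexSet d B, (∏ l, m (J l)) * A (∑ l, J l)

lemma indexSet_zero (B : ℕ) : indexSet 0 B = {![]} := by
  ext J
  simp only [indexSet, Finset.mem_filter, Fintype.mem_piFinset, Finset.mem_singleton]
  constructor
  · intro _
    exact funext fun l => l.elim0
  · intro _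
    exact ⟨fun l => l.elim0, by simp⟩

lemma indexSet_empty {d c : ℕ} (h : c < d) : indexSet d c = ∅ := by
  ext J
  simp only [indexSet, Finset.mem_filter, Fintype.mem_piFinset, Finset.notMem_empty,
    iff_false, not_and]
  intro hJ hs
  have h1 : ∀ l, 1 ≤ J l := fun l => (Finset.mem_Icc.mp (hJ l)).1
  have : (d : ℕ) ≤ ∑ l, J l := by
    calc d = ∑ _l : Fin d, 1 := by simp
    _ ≤ ∑ l, J l := Finset.sum_le_sum fun l _ => h1 l
  omega

lemma indexSet_cons (d B : ℕ) (F : (Fin (d+1) → ℕ) → ℝ) :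
    ∑ J ∈ indexSet (d+1) B, F J
      = ∑ j ∈ Finset.Icc 1 B, ∑ J ∈ indexSet d (B - j), F (Fin.cons j J) := by
  rw [Finset.sum_sigma' (Finset.Icc 1 B) (fun j => indexSet d (B - j))
    (fun j (J : Fin d → ℕ) => F (Fin.cons j J))]
  refine Finset.sum_nbij' (fun (J : Fin (d+1) → ℕ) => (⟨J 0, Fin.tail J⟩ : Σ _j : ℕ, (Fin d → ℕ)))
    (fun (p : Σ _j : ℕ, Fin d → ℕ) => Fin.cons p.1 p.2) ?_ ?_ ?_ ?_ ?_
  · rintro J hJ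
    simp only [indexSet, Finset.mem_filter, Fintype.mem_piFinset, Finset.mem_sigma,
      Finset.mem_Icc] at hJ ⊢
    obtain ⟨hpi, hsum⟩ := hJ
    have h0 := hpi 0
    rw [Fin.sum_univ_succ] at hsum
    have htail : ∀ l : Fin d, 1 ≤ J l.succ := fun l => (hpi l.succ).1
    have hle : ∀ l : Fin d, J l.succ ≤ ∑ i, J (Fin.succ i) := fun l =>
      Finset.single_le_sum (f := fun i : Fin d => J i.succ) (fun i _ => Nat.zero_le _)
        (Finset.mem_univ l)
    refine ⟨⟨h0.1, by omega⟩, ⟨fun l => ?_, ?_⟩⟩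
    · show 1 ≤ J l.succ ∧ J l.succ ≤ B - J 0
      have h2 := hle l
      exact ⟨htail l, by omega⟩
    · show ∑ i : Fin d, J i.succ ≤ B - J 0
      omega
  · rintro ⟨j, J⟩ hp
    simp only [indexSet, Finset.mem_filter, Fintype.mem_piFinset, Finset.mem_sigma,
      Finset.mem_Icc] at hp ⊢
    obtain ⟨hj, hpi, hsum⟩ := hp
    constructor
    · intro l
      refine Fin.cases ?_ ?_ l
      · simp [Fin.cons_zero]; omega
      · intro i
        simp only [Fin.cons_succ]
        obtain ⟨h1i, h2i⟩ := hpi i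
        exact ⟨h1i, by omega⟩
    · rw [Fin.sum_cons]; omega
  · intro J _
    simp [Fin.cons_self_tail]
  · rintro ⟨j, J⟩ _
    simp [Fin.cons_zero, Fin.tail_cons]
  · intro J _
    rw [Fin.cons_self_tail]

lemma S_rec (m A : ℕ → ℝ) (B : ℕ) :
    S m A B = A 0 - ∑ j ∈ Finset.Icc 1 B, m j * S m (fun t => A (j + t)) (B - j) := by
  have key : ∀ j ∈ Finset.Icc 1 B, m j * S m (fun t => A (j + t)) (B - j)
      = ∑ d ∈ Finset.range B, (-1:ℝ)^d *
          ∑ J ∈ indexSet d (B-j), (m j * ∏ l, m (J l)) * A (j + ∑ l, J l) := by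
    intro j hj
    simp only [Finset.mem_Icc] at hj
    unfold S
    rw [Finset.mul_sum,
      ← Finset.sum_subset (Finset.range_subset_range.mpr (by omega : B - j + 1 ≤ B))
        (fun d _ hnd => by
          rw [indexSet_empty (by simp only [Finset.mem_range] at hnd ⊢; omega)]
          simp)]
    refine Finset.sum_congr rfl fun d hd => ?_
    rw [mul_left_comm]
    congr 1
    rw [Finset.mul_sum]
    exact Finset.sum_congr rfl fun J _ => by ring
  rw [Finset.sum_congr rfl key, Finset.sum_comm]
  unfold S
  rw [Finset.sum_range_succ']
  have h0 : ((-1:ℝ)^0 * ∑ J ∈ indexSet 0 B, (∏ l, m (J l)) * A (∑ l, J l)) = A 0 := by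
    rw [indexSet_zero]; simp
  rw [h0]
  have hmain : ∀ d, (-1:ℝ)^(d+1) * ∑ J ∈ indexSet (d+1) B, (∏ l, m (J l)) * A (∑ l, J l)
      = -(∑ j ∈ Finset.Icc 1 B, (-1:ℝ)^d *
          ∑ J ∈ indexSet d (B-j), (m j * ∏ l, m (J l)) * A (j + ∑ l, J l)) := by
    intro d
    rw [indexSet_cons d B (fun J => (∏ l, m (J l)) * A (∑ l, J l)), Finset.mul_sum,
      ← Finset.sum_neg_distrib]
    refine Finset.sum_congr rfl fun j _ => ?_
    have hcons : ∀ J ∈ indexSet d (B-j),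
        (∏ l : Fin (d+1), m ((Fin.cons j J : Fin (d+1) → ℕ) l))
          * A (∑ l : Fin (d+1), (Fin.cons j J : Fin (d+1) → ℕ) l)
          = (m j * ∏ l, m (J l)) * A (j + ∑ l, J l) := fun J _ => by
      rw [Fin.prod_univ_succ, Fin.sum_univ_succ]
      simp only [Fin.cons_zero, Fin.cons_succ]
    rw [Finset.sum_congr rfl hcons]
    ring
  rw [Finset.sum_congr rfl fun d _ => hmain d, Finset.sum_neg_distrib]
  ring

lemma sum_Icc_one (B : ℕ) (g : ℕ → ℝ) :
    ∑ j ∈ Finset.Icc 1 B, g j = ∑ i ∈ Finset.range B, g (i+1) := by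
  rw [← Finset.Ico_add_one_right_eq_Icc, Finset.sum_Ico_eq_sum_range]
  exact Finset.sum_congr (by norm_num) fun i _ => by rw [add_comm]

lemma taylor_rearranged (g : ℕ → ℝ) (x y B : ℕ) :
    g x = g (x + y) - (∑ j ∈ Finset.Icc 1 B, (y.choose j : ℝ) * fdiff^[j] g x)
      - tupleSum g x y B := by
  have h := taylor g x y B
  rw [Finset.sum_range_succ'] at h
  simp only [Nat.choose_zero_right, Nat.cast_one, one_mul, Function.iterate_zero_apply] at h
  rw [sum_Icc_one]
  linarith [h]


/-- Discrete reverse Taylor formula: for independent `ℕ`-valued `X, Y`,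
`E[f(X)] = Σ_{d≥0} (−1)^d Σ_{J ∈ ℕ_*^d, |J| ≤ N} m_Y^{(J)}·E[Δ^{|J|} f(X+Y)] + ε_N(f,X,Y)`
where `ε_N(f,X,Y) = − Σ_{d≥0} (−1)^d Σ_{J} m_Y^{(J)}·δ_{N−|J|}(Δ^{|J|} f, X, Y)`,
`m_Y^{(J)} = Π_l E[C(Y, j_l)]`, and `δ_M(g,X,Y) = E[Σ_{0 ≤ j_1<…<j_{M+1}<Y} Δ^{M+1} g(X+j_1)]`.
The sum over `d ≥ 0` is finite since the index set is empty for `d > N`. -/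
theorem discrete_reverse_taylor {Ω : Type*} [MeasurableSpace Ω] (μ : Measure Ω)
    [IsProbabilityMeasure μ] (X Y : Ω → ℕ) (hX : Measurable X) (hY : Measurable Y)
    (hindep : IndepFun X Y μ) (N : ℕ) (f : ℕ → ℝ)
    (hfX : Integrable (fun ω => f (X ω)) μ)
    (hfXY : ∀ k ≤ N, Integrable (fun ω => fdiff^[k] f (X ω + Y ω)) μ)
    (hmom : ∀ k ≤ N + 1, Integrable (fun ω => ((Y ω).choose k : ℝ)) μ)
    (hrem : ∀ k ≤ N, Integrable (fun ω => tupleSum (fdiff^[k] f) (X ω) (Y ω) (N - k)) μ) :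
    ∫ ω, f (X ω) ∂μ
      = ∑ d ∈ Finset.range (N + 1), (-1 : ℝ) ^ d *
          ∑ J ∈ indexSet d N,
            (∏ l, ∫ ω, ((Y ω).choose (J l) : ℝ) ∂μ) *
              ∫ ω, fdiff^[∑ l, J l] f (X ω + Y ω) ∂μ
        + -(∑ d ∈ Finset.range (N + 1), (-1 : ℝ) ^ d *
            ∑ J ∈ indexSet d N,
              (∏ l, ∫ ω, ((Y ω).choose (J l) : ℝ) ∂μ) *
                ∫ ω, tupleSum (fdiff^[∑ l, J l] f) (X ω) (Y ω) (N - ∑ l, J l) ∂μ) := by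
  have hiter : ∀ j k : ℕ, fdiff^[j] (fdiff^[k] f) = fdiff^[k+j] f := fun j k => by
    rw [add_comm, Function.iterate_add_apply]
  have hident : ∀ B k : ℕ, (fun ω => fdiff^[k] f (X ω)) = fun ω =>
      fdiff^[k] f (X ω + Y ω)
      - (∑ j ∈ Finset.Icc 1 B, ((Y ω).choose j : ℝ) * fdiff^[k+j] f (X ω))
      - tupleSum (fdiff^[k] f) (X ω) (Y ω) B := by
    intro B k
    funext ω
    rw [taylor_rearranged (fdiff^[k] f) (X ω) (Y ω) B]
    congr 2
    exact Finset.sum_congr rfl fun j _ => by rw [hiter j k]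
  have hindYX : ∀ (j k : ℕ), IndepFun (fun ω => ((Y ω).choose j : ℝ))
      (fun ω => fdiff^[k] f (X ω)) μ :=
    fun j k => hindep.symm.comp (φ := fun n : ℕ => ((n.choose j : ℕ) : ℝ))
      (ψ := fun n : ℕ => fdiff^[k] f n) measurable_from_nat measurable_from_nat
  -- Integrability of fdiff^[k] f (X)
  have I4 : ∀ B k : ℕ, k + B = N → Integrable (fun ω => fdiff^[k] f (X ω)) μ := by
    intro B
    induction B using Nat.strong_induction_on with
    | _ B ih =>
      intro k hk
      rw [hident B k]
      have hBk : N - k = B := by omega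
      refine Integrable.sub (Integrable.sub (hfXY k (by omega)) ?_) ?_
      · apply integrable_finset_sum
        intro j hj
        simp only [Finset.mem_Icc] at hj
        exact (hindYX j (k+j)).integrable_mul (hmom j (by omega))
          (ih (B - j) (by omega) (k + j) (by omega))
      · have h := hrem k (by omega)
        rwa [hBk] at h
  -- the key expectation identity
  have hint : ∀ B k : ℕ, k + B = N →
      ∫ ω, fdiff^[k] f (X ω) ∂μ
        = (∫ ω, fdiff^[k] f (X ω + Y ω) ∂μ)
          - (∑ j ∈ Finset.Icc 1 B, (∫ ω, ((Y ω).choose j : ℝ) ∂μ) *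
              ∫ ω, fdiff^[k+j] f (X ω) ∂μ)
          - ∫ ω, tupleSum (fdiff^[k] f) (X ω) (Y ω) B ∂μ := by
    intro B k hk
    have hBk : N - k = B := by omega
    have hprod : ∀ j ∈ Finset.Icc 1 B,
        Integrable (fun ω => ((Y ω).choose j : ℝ) * fdiff^[k+j] f (X ω)) μ := by
      intro j hj
      simp only [Finset.mem_Icc] at hj
      exact (hindYX j (k+j)).integrable_mul (hmom j (by omega))
        (I4 (B - j) (k + j) (by omega))
    have hsumint : Integrable (fun ω =>
        ∑ j ∈ Finset.Icc 1 B, ((Y ω).choose j : ℝ) * fdiff^[k+j] f (X ω)) μ :=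
      integrable_finset_sum _ hprod
    have htup : Integrable (fun ω => tupleSum (fdiff^[k] f) (X ω) (Y ω) B) μ := by
      have h := hrem k (by omega); rwa [hBk] at h
    have h12 : Integrable (fun ω => fdiff^[k] f (X ω + Y ω)
        - ∑ j ∈ Finset.Icc 1 B, ((Y ω).choose j : ℝ) * fdiff^[k+j] f (X ω)) μ :=
      (hfXY k (by omega)).sub hsumint
    rw [hident B k]
    rw [integral_sub h12 htup, integral_sub (hfXY k (by omega)) hsumint,
      integral_finset_sum _ hprod]
    congr 2
    refine Finset.sum_congr rfl fun j hj => ?_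
    exact (hindYX j (k+j)).integral_fun_mul_eq_mul_integral
      (((measurable_from_nat (f := fun n : ℕ => ((n.choose j : ℕ) : ℝ))).comp
        hY).aestronglyMeasurable)
      (((measurable_from_nat (f := fun n : ℕ => fdiff^[k+j] f n)).comp
        hX).aestronglyMeasurable)
  set m : ℕ → ℝ := fun j => ∫ ω, ((Y ω).choose j : ℝ) ∂μ with hm
  -- main recursion
  have main : ∀ B k : ℕ, k + B = N →
      ∫ ω, fdiff^[k] f (X ω) ∂μ
        = S m (fun t => ∫ ω, fdiff^[k+t] f (X ω + Y ω) ∂μ) B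
          - S m (fun t => ∫ ω, tupleSum (fdiff^[k+t] f) (X ω) (Y ω) (N - (k+t)) ∂μ) B := by
    intro B
    induction B using Nat.strong_induction_on with
    | _ B ih =>
      intro k hk
      rw [S_rec, S_rec, hint B k hk]
      have hstep : ∀ j ∈ Finset.Icc 1 B,
          m j * ∫ ω, fdiff^[k+j] f (X ω) ∂μ
            = m j * S m (fun t => ∫ ω, fdiff^[k+(j+t)] f (X ω + Y ω) ∂μ) (B - j)
              - m j * S m (fun t =>
                  ∫ ω, tupleSum (fdiff^[k+(j+t)] f) (X ω) (Y ω) (N - (k+(j+t))) ∂μ) (B - j) := by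
        intro j hj
        simp only [Finset.mem_Icc] at hj
        have h := ih (B - j) (by omega) (k + j) (by omega)
        have e1 : (fun t => ∫ ω, fdiff^[k+j+t] f (X ω + Y ω) ∂μ)
            = fun t => ∫ ω, fdiff^[k+(j+t)] f (X ω + Y ω) ∂μ := by
          funext t; rw [add_assoc]
        have e2 : (fun t => ∫ ω, tupleSum (fdiff^[k+j+t] f) (X ω) (Y ω) (N - (k+j+t)) ∂μ)
            = fun t => ∫ ω, tupleSum (fdiff^[k+(j+t)] f) (X ω) (Y ω) (N - (k+(j+t))) ∂μ := by
          funext t; rw [add_assoc]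
        rw [h, e1, e2, mul_sub]
      rw [Finset.sum_congr rfl hstep, Finset.sum_sub_distrib]
      simp only [add_zero]
      rw [show N - k = B from by omega]
      ring
  have h := main N 0 (by omega)
  simp only [Function.iterate_zero_apply, zero_add] at h
  rw [sub_eq_add_neg] at h
  exact h
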